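/- The worst-case (minimal) gap between the front and rear cars over all time occurs either at time 0 or after both cars have reached a full stop. Formally, with r(t), f(t) as above, inf_{t ≥ 0} (f(t) − r(t)) = min( f(0) − r(0), lim_{t→∞} (f(t) − r(t)) ). -/

import Mathlib

open Set Filter

open intervalIntegral in
private lemma lin_int (a b c d : ℝ) :
    ∫ s in a..b, (c + d * s) = c * (b - a) + d * (b ^ 2 - a ^ 2) / 2 := by
  have h : ∫ s in a..b, (c + d * s) = (∫ _ in a..b, c) + ∫ s in a..b, d * s :=
    intervalIntegral.integral_add intervalIntegrable_const
      ((continuous_const.mul continuous_id).intervalIntegrable _ _)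
  rw [h, intervalIntegral.integral_const, intervalIntegral.integral_const_mul,
    integral_id, smul_eq_mul]
  ring

private lemma inf_bound {h : ℝ → ℝ} (hc : Continuous h)
    (hsign : ∀ s t : ℝ, 0 ≤ s → s ≤ t → h s ≤ 0 → h t ≤ 0)
    {t T : ℝ} (ht : 0 ≤ t) (htT : t ≤ T) :
    min 0 (∫ s in (0:ℝ)..T, h s) ≤ ∫ s in (0:ℝ)..t, h s := by
  by_cases hex : ∃ s, 0 ≤ s ∧ s ≤ t ∧ h s < 0
  · obtain ⟨s₀, hs0, hs0t, hneg⟩ := hex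
    have h2 : ∫ s in t..T, h s ≤ 0 := by
      have h3 : ∫ s in t..T, h s ≤ ∫ _ in t..T, (0:ℝ) := by
        apply intervalIntegral.integral_mono_on htT (hc.intervalIntegrable _ _)
          intervalIntegrable_const
        intro u hu
        exact hsign s₀ u hs0 (hs0t.trans hu.1) hneg.le
      simpa using h3
    have hsplit : (∫ s in (0:ℝ)..t, h s) + ∫ s in t..T, h s = ∫ s in (0:ℝ)..T, h s :=
      intervalIntegral.integral_add_adjacent_intervals (hc.intervalIntegrable _ _)
        (hc.intervalIntegrable _ _)
    have h4 := min_le_right 0 (∫ s in (0:ℝ)..T, h s)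
    linarith
  · push_neg at hex
    have h5 : 0 ≤ ∫ s in (0:ℝ)..t, h s := by
      apply intervalIntegral.integral_nonneg ht
      intro u hu
      exact hex u hu.1 hu.2
    exact le_trans (min_le_left _ _) h5

set_option maxHeartbeats 2000000 in
/-- The worst-case gap between the front and rear cars occurs either at time `0`
or in the limit after both cars have stopped. -/
theorem worst_case_gap_at_zero_or_limit (v_r v_f ρ a_acc a_min a_max d_0 : ℝ)
    (hvr : 0 ≤ v_r) (hvf : 0 ≤ v_f) (hρ : 0 < ρ)
    (hacc : 0 ≤ a_acc) (hmin : 0 < a_min) (hlt : a_min < a_max)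
    (vR : ℝ → ℝ) (vF : ℝ → ℝ) (r f : ℝ → ℝ) (L : ℝ)
    (hvR : vR = fun t => if t ≤ ρ then v_r + a_acc * t
        else max 0 (v_r + ρ * a_acc - a_min * (t - ρ)))
    (hvF : vF = fun t => max 0 (v_f - a_max * t))
    (hr : r = fun t => ∫ s in (0:ℝ)..t, vR s)
    (hf : f = fun t => d_0 + ∫ s in (0:ℝ)..t, vF s)
    (hL : L = d_0 + v_f ^ 2 / (2 * a_max) -
        (v_r * ρ + a_acc * ρ ^ 2 / 2 + (v_r + ρ * a_acc) ^ 2 / (2 * a_min))) :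
    Tendsto (fun t => f t - r t) atTop (nhds L) ∧
      sInf ((fun t => f t - r t) '' Ici (0:ℝ)) = min (f 0 - r 0) L := by
  have hamax : 0 < a_max := hmin.trans hlt
  obtain ⟨v1, hv1⟩ : ∃ v1 : ℝ, v1 = v_r + ρ * a_acc := ⟨_, rfl⟩
  rw [← hv1] at hvR hL
  have hv1nn : 0 ≤ v1 := by rw [hv1]; positivity
  obtain ⟨Tf, hTf⟩ : ∃ Tf : ℝ, Tf = v_f / a_max := ⟨_, rfl⟩
  obtain ⟨Tr, hTr⟩ : ∃ Tr : ℝ, Tr = ρ + v1 / a_min := ⟨_, rfl⟩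
  obtain ⟨T, hT⟩ : ∃ T : ℝ, T = max Tf Tr := ⟨_, rfl⟩
  have hTfnn : 0 ≤ Tf := by rw [hTf]; positivity
  have hTrρ : ρ ≤ Tr := by
    have h0 : 0 ≤ v1 / a_min := div_nonneg hv1nn hmin.le
    rw [hTr]; linarith
  have hTnn : 0 ≤ T := hT ▸ le_trans hTfnn (le_max_left _ _)
  have hTTf : Tf ≤ T := hT ▸ le_max_left _ _
  have hTTr : Tr ≤ T := hT ▸ le_max_right _ _
  -- continuity
  have hcF : Continuous vF := by
    rw [hvF]; fun_prop
  have hcR : Continuous vR := by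
    rw [hvR]
    apply Continuous.if_le (by fun_prop) (by fun_prop) continuous_id continuous_const
    intro x hx
    simp only [id_eq] at hx
    subst hx
    rw [sub_self, mul_zero, sub_zero, max_eq_right hv1nn, hv1]
    ring
  -- nonnegativity of vR
  have hRnn : ∀ u : ℝ, 0 ≤ u → 0 ≤ vR u := by
    intro u hu
    rw [hvR]
    by_cases h : u ≤ ρ <;> simp only [h, if_true, if_false]
    · positivity
    · exact le_max_left _ _
  -- vanishing of vF past Tf
  have hF0 : ∀ u : ℝ, Tf ≤ u → vF u = 0 := by
    intro u hu
    rw [hvF]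
    simp only [max_eq_left_iff]
    rw [hTf, div_le_iff₀ hamax] at hu
    nlinarith
  -- vanishing of vR past Tr
  have hR0 : ∀ u : ℝ, Tr ≤ u → vR u = 0 := by
    intro u hu
    rw [hvR]
    by_cases h : u ≤ ρ
    · have huρ : u = ρ := le_antisymm h (hTrρ.trans hu)
      have hv10 : v1 = 0 := by
        have h1 : v1 / a_min ≤ 0 := by
          rw [hTr] at hu; rw [huρ] at hu; linarith
        have h2 : v1 / a_min = 0 := le_antisymm h1 (div_nonneg hv1nn hmin.le)
        rcases div_eq_zero_iff.mp h2 with h3 | h3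
        · exact h3
        · exact absurd h3 hmin.ne'
      rw [huρ] at hu ⊢
      simp only [le_refl, if_true]
      rw [hv1] at hv10; linarith
    · simp only [h, if_false, max_eq_left_iff, sub_nonpos]
      rw [hTr] at hu
      have h4 : v1 / a_min ≤ u - ρ := by linarith
      rw [div_le_iff₀ hmin] at h4
      nlinarith
  -- decay lower bound for vR
  have hRdecay : ∀ s t : ℝ, 0 ≤ s → s ≤ t → vR s - a_min * (t - s) ≤ vR t := by
    intro s t hs hst
    rw [hvR]
    by_cases ht : t ≤ ρ
    · have hsρ : s ≤ ρ := hst.trans ht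
      simp only [hsρ, ht, if_true]
      nlinarith [mul_nonneg hacc (sub_nonneg.mpr hst), mul_nonneg hmin.le (sub_nonneg.mpr hst)]
    · by_cases hsρ : s ≤ ρ
      · simp only [hsρ, ht, if_true, if_false]
        have h1 : v_r + a_acc * s - a_min * (t - s) ≤ v1 - a_min * (t - ρ) := by
          rw [hv1]
          nlinarith [mul_nonneg hacc (sub_nonneg.mpr hsρ), mul_nonneg hmin.le (sub_nonneg.mpr hsρ)]
        exact le_trans (by linarith) (le_max_right _ _)
      · simp only [hsρ, ht, if_false]
        have hc0 : 0 ≤ a_min * (t - s) := mul_nonneg hmin.le (sub_nonneg.mpr hst)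
        have h1 : max 0 (v1 - a_min * (s - ρ)) ≤
            max 0 (v1 - a_min * (t - ρ)) + a_min * (t - s) := by
          apply max_le
          · nlinarith [le_max_left 0 (v1 - a_min * (t - ρ))]
          · nlinarith [le_max_right 0 (v1 - a_min * (t - ρ))]
        linarith
  -- once the gap derivative is nonpositive, it stays nonpositive
  have hsign : ∀ s t : ℝ, 0 ≤ s → s ≤ t → vF s - vR s ≤ 0 → vF t - vR t ≤ 0 := by
    intro s t hs hst hle
    rw [sub_nonpos] at hle ⊢
    have htnn : 0 ≤ t := hs.trans hst
    rw [hvF]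
    apply max_le (hRnn t htnn)
    by_cases hpos : v_f - a_max * t ≤ 0
    · exact hpos.trans (hRnn t htnn)
    · push_neg at hpos
      have hspos : 0 < v_f - a_max * s := by nlinarith
      have hFs : vF s = v_f - a_max * s := by
        rw [hvF]; exact max_eq_right hspos.le
      have h1 : v_f - a_max * s ≤ vR s := hFs ▸ hle
      have h2 := hRdecay s t hs hst
      nlinarith [mul_nonneg (sub_nonneg.mpr hst) (sub_nonneg.mpr hlt.le)]
  -- integral of vF
  have hintF : ∫ s in (0:ℝ)..T, vF s = v_f ^ 2 / (2 * a_max) := by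
    have hsplit : (∫ s in (0:ℝ)..Tf, vF s) + ∫ s in Tf..T, vF s = ∫ s in (0:ℝ)..T, vF s :=
      intervalIntegral.integral_add_adjacent_intervals (hcF.intervalIntegrable _ _)
        (hcF.intervalIntegrable _ _)
    have h2 : ∫ s in Tf..T, vF s = 0 := by
      rw [intervalIntegral.integral_congr (g := fun _ => (0:ℝ))
        (fun u hu => hF0 u ((uIcc_of_le hTTf ▸ hu).1))]
      simp
    have h1 : ∫ s in (0:ℝ)..Tf, vF s = v_f ^ 2 / (2 * a_max) := by
      have hcongr : ∫ s in (0:ℝ)..Tf, vF s = ∫ s in (0:ℝ)..Tf, (v_f + (-a_max) * s) := by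
        apply intervalIntegral.integral_congr
        intro u hu
        rw [uIcc_of_le hTfnn] at hu
        rw [hvF]
        simp only
        rw [max_eq_right (by nlinarith [(le_div_iff₀ hamax).mp (hTf ▸ hu.2 : u ≤ v_f / a_max)])]
        ring
      rw [hcongr, lin_int, hTf]
      field_simp
      ring
    linarith
  -- integral of vR
  have hintR : ∫ s in (0:ℝ)..T, vR s =
      v_r * ρ + a_acc * ρ ^ 2 / 2 + v1 ^ 2 / (2 * a_min) := by
    have hsplit1 : (∫ s in (0:ℝ)..ρ, vR s) + ∫ s in ρ..Tr, vR s = ∫ s in (0:ℝ)..Tr, vR s :=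
      intervalIntegral.integral_add_adjacent_intervals (hcR.intervalIntegrable _ _)
        (hcR.intervalIntegrable _ _)
    have hsplit2 : (∫ s in (0:ℝ)..Tr, vR s) + ∫ s in Tr..T, vR s = ∫ s in (0:ℝ)..T, vR s :=
      intervalIntegral.integral_add_adjacent_intervals (hcR.intervalIntegrable _ _)
        (hcR.intervalIntegrable _ _)
    have hC : ∫ s in Tr..T, vR s = 0 := by
      rw [intervalIntegral.integral_congr (g := fun _ => (0:ℝ))
        (fun u hu => hR0 u ((uIcc_of_le hTTr ▸ hu).1))]
      simp
    have hA : ∫ s in (0:ℝ)..ρ, vR s = v_r * ρ + a_acc * ρ ^ 2 / 2 := by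
      have hcongr : ∫ s in (0:ℝ)..ρ, vR s = ∫ s in (0:ℝ)..ρ, (v_r + a_acc * s) := by
        apply intervalIntegral.integral_congr
        intro u hu
        rw [uIcc_of_le hρ.le] at hu
        rw [hvR]
        simp [hu.2]
      rw [hcongr, lin_int]
      ring
    have hB : ∫ s in ρ..Tr, vR s = v1 ^ 2 / (2 * a_min) := by
      have hcongr : ∫ s in ρ..Tr, vR s = ∫ s in ρ..Tr, ((v1 + a_min * ρ) + (-a_min) * s) := by
        apply intervalIntegral.integral_congr
        intro u hu
        rw [uIcc_of_le hTrρ] at hu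
        rw [hvR]
        by_cases h : u ≤ ρ
        · have huρ : u = ρ := le_antisymm h hu.1
          simp only [huρ, le_refl, if_true]
          rw [hv1]; ring
        · simp only [h, if_false]
          rw [max_eq_right]
          · ring
          · have h4 : u - ρ ≤ v1 / a_min := by
              have := hu.2; rw [hTr] at this; linarith
            rw [le_div_iff₀ hmin] at h4
            nlinarith
      rw [hcongr, lin_int, hTr]
      field_simp
      ring
    linarith
  -- gap is constant L past T
  have hg0 : f 0 - r 0 = d_0 := by
    rw [hr, hf]
    simp
  have heventual : ∀ t : ℝ, T ≤ t → f t - r t = L := by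
    intro t ht
    have hfT : ∫ s in (0:ℝ)..t, vF s = v_f ^ 2 / (2 * a_max) := by
      have hsplit : (∫ s in (0:ℝ)..T, vF s) + ∫ s in T..t, vF s = ∫ s in (0:ℝ)..t, vF s :=
        intervalIntegral.integral_add_adjacent_intervals (hcF.intervalIntegrable _ _)
          (hcF.intervalIntegrable _ _)
      have h0 : ∫ s in T..t, vF s = 0 := by
        rw [intervalIntegral.integral_congr (g := fun _ => (0:ℝ))
          (fun u hu => hF0 u (hTTf.trans (uIcc_of_le ht ▸ hu).1))]
        simp
      linarith
    have hrT : ∫ s in (0:ℝ)..t, vR s = v_r * ρ + a_acc * ρ ^ 2 / 2 + v1 ^ 2 / (2 * a_min) := by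
      have hsplit : (∫ s in (0:ℝ)..T, vR s) + ∫ s in T..t, vR s = ∫ s in (0:ℝ)..t, vR s :=
        intervalIntegral.integral_add_adjacent_intervals (hcR.intervalIntegrable _ _)
          (hcR.intervalIntegrable _ _)
      have h0 : ∫ s in T..t, vR s = 0 := by
        rw [intervalIntegral.integral_congr (g := fun _ => (0:ℝ))
          (fun u hu => hR0 u (hTTr.trans (uIcc_of_le ht ▸ hu).1))]
        simp
      linarith
    rw [hr, hf]
    simp only
    rw [hfT, hrT, hL]
  -- pointwise lower bound
  have hbound : ∀ t : ℝ, 0 ≤ t → min (f 0 - r 0) L ≤ f t - r t := by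
    intro t ht
    rcases le_total T t with hTt | htT
    · rw [heventual t hTt]
      exact min_le_right _ _
    · have hsub : ∀ u : ℝ, (∫ s in (0:ℝ)..u, (vF s - vR s)) =
          (∫ s in (0:ℝ)..u, vF s) - ∫ s in (0:ℝ)..u, vR s := fun u =>
        intervalIntegral.integral_sub (hcF.intervalIntegrable _ _) (hcR.intervalIntegrable _ _)
      have hkey := inf_bound (hcF.sub hcR) hsign ht htT
      simp only [Pi.sub_apply] at hkey
      rw [hsub, hsub, hintF, hintR] at hkey
      have hgt : f t - r t = d_0 + ((∫ s in (0:ℝ)..t, vF s) - ∫ s in (0:ℝ)..t, vR s) := by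
        rw [hr, hf]; ring
      have hL' : L = d_0 + (v_f ^ 2 / (2 * a_max) -
          (v_r * ρ + a_acc * ρ ^ 2 / 2 + v1 ^ 2 / (2 * a_min))) := by
        rw [hL]; ring
      rcases le_total 0 (v_f ^ 2 / (2 * a_max) -
          (v_r * ρ + a_acc * ρ ^ 2 / 2 + v1 ^ 2 / (2 * a_min))) with h0E | hE0
      · rw [min_eq_left h0E] at hkey
        linarith [min_le_left (f 0 - r 0) L]
      · rw [min_eq_right hE0] at hkey
        linarith [min_le_right (f 0 - r 0) L]
  refine ⟨?_, ?_⟩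
  · apply Tendsto.congr' ?_ (tendsto_const_nhds (α := ℝ) (x := L) (f := atTop))
    filter_upwards [eventually_ge_atTop T] with t ht
    exact (heventual t ht).symm
  · have hmem0 : f 0 - r 0 ∈ (fun t => f t - r t) '' Ici (0:ℝ) :=
      ⟨0, self_mem_Ici, rfl⟩
    have hmemL : L ∈ (fun t => f t - r t) '' Ici (0:ℝ) :=
      ⟨T, hTnn, heventual T le_rfl⟩
    have hbdd : BddBelow ((fun t => f t - r t) '' Ici (0:ℝ)) := by
      refine ⟨min (f 0 - r 0) L, ?_⟩
      rintro x ⟨t, ht, rfl⟩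
      exact hbound t ht
    apply le_antisymm
    · exact le_min (csInf_le hbdd hmem0) (csInf_le hbdd hmemL)
    · apply le_csInf ⟨_, hmem0⟩
      rintro x ⟨t, ht, rfl⟩
      exact hbound t ht
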